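/- With the GLM notation below, for all θ, θ' ∈ ℝ^d, setting γ = ‖f_t(θ) − f_t(θ')‖_{H(θ')⁻¹}, one has ‖θ − θ'‖₂ ≤ M·γ²/λ + γ/√λ. -/

import Mathlib

open Matrix intervalIntegral

private lemma dot_sum_smul {d t : ℕ} (c : Fin t → ℝ) (X : Fin t → Fin d → ℝ) (z : Fin d → ℝ) :
    z ⬝ᵥ (∑ l, c l • X l) = ∑ l, c l * (X l ⬝ᵥ z) := by
  simp only [dotProduct, Finset.sum_apply, Pi.smul_apply, smul_eq_mul, Finset.mul_sum]
  rw [Finset.sum_comm]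
  exact Finset.sum_congr rfl fun l _ => Finset.sum_congr rfl fun i _ => by ring

private lemma qf_expand {d t : ℕ} (c : Fin t → ℝ) (lam : ℝ) (X : Fin t → Fin d → ℝ)
    (z w : Fin d → ℝ) :
    z ⬝ᵥ ((∑ l, c l • vecMulVec (X l) (X l) + lam • (1 : Matrix (Fin d) (Fin d) ℝ)) *ᵥ w)
      = ∑ l, c l * ((X l ⬝ᵥ z) * (X l ⬝ᵥ w)) + lam * (z ⬝ᵥ w) := by
  rw [Matrix.add_mulVec, Matrix.smul_mulVec, Matrix.one_mulVec, dotProduct_add,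
    dotProduct_smul]
  have h1 : (∑ l, c l • vecMulVec (X l) (X l)) *ᵥ w = ∑ l, (c l * (X l ⬝ᵥ w)) • X l := by
    ext i
    simp only [Matrix.mulVec, dotProduct, Finset.sum_apply, Matrix.smul_apply,
      Matrix.sum_apply, vecMulVec_apply, Pi.smul_apply, smul_eq_mul, Finset.sum_mul,
      Finset.mul_sum]
    rw [Finset.sum_comm]
    exact Finset.sum_congr rfl fun l _ => Finset.sum_congr rfl fun j _ => by ring
  rw [h1, dot_sum_smul]
  simp only [smul_eq_mul]
  congr 1
  exact Finset.sum_congr rfl fun l _ => by rw [dotProduct_comm (X l) z]; ring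

private lemma herm_expand {d t : ℕ} (c : Fin t → ℝ) (lam : ℝ) (X : Fin t → Fin d → ℝ) :
    (∑ l, c l • vecMulVec (X l) (X l) + lam • (1 : Matrix (Fin d) (Fin d) ℝ)).IsHermitian := by
  unfold Matrix.IsHermitian
  ext i j
  simp only [conjTranspose_apply, Matrix.add_apply, Matrix.sum_apply, Matrix.smul_apply,
    vecMulVec_apply, Matrix.one_apply, smul_eq_mul, star_trivial]
  have : (if j = i then (1:ℝ) else 0) = if i = j then 1 else 0 := by
    by_cases h : i = j <;> simp [h, eq_comm]
  rw [this]
  congr 1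
  exact Finset.sum_congr rfl fun l _ => by ring

private lemma sc_key (M : ℝ) (hM : 0 < M) (μ : ℝ → ℝ)
    (hdiff2 : Differentiable ℝ (deriv μ))
    (hpos : ∀ u : ℝ, 0 < deriv μ u)
    (hsc : ∀ u : ℝ, |deriv (deriv μ) u| ≤ M * deriv μ u)
    (x b : ℝ) :
    deriv μ x ≤ (1 + M * |b|) * ∫ s in (0:ℝ)..1, deriv μ (x + s * b) := by
  have hgc : Continuous (fun s : ℝ => deriv μ (x + s * b)) :=
    hdiff2.continuous.comp (by continuity)
  set g : ℝ → ℝ := fun s => deriv μ (x + s * b) with hg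
  have hgint : ∀ a c : ℝ, IntervalIntegrable g MeasureTheory.volume a c :=
    fun a c => hgc.intervalIntegrable a c
  set A : ℝ := ∫ s in (0:ℝ)..1, g s with hA
  have hgnn : ∀ s, 0 ≤ g s := fun s => (hpos _).le
  have hinner : ∀ s : ℝ, HasDerivAt (fun s : ℝ => x + s * b) b s := by
    intro s
    simpa using ((hasDerivAt_id s).mul_const b).const_add x
  have hgd : ∀ s : ℝ, HasDerivAt g (deriv (deriv μ) (x + s * b) * b) s := by
    intro s
    exact ((hdiff2 (x + s * b)).hasDerivAt).comp s (hinner s)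
  set F : ℝ → ℝ := fun s => ∫ r in (0:ℝ)..s, g r with hF
  have hFd : ∀ s : ℝ, HasDerivAt F (g s) s := fun s =>
    integral_hasDerivAt_right (hgint 0 s)
      (hgc.stronglyMeasurableAtFilter _ _) hgc.continuousAt
  set c : ℝ := M * |b| with hc
  have hcnn : 0 ≤ c := mul_nonneg hM.le (abs_nonneg b)
  set φ : ℝ → ℝ := fun s => g s + c * F s with hφ
  have hφd : ∀ s : ℝ, HasDerivAt φ (deriv (deriv μ) (x + s * b) * b + c * g s) s :=
    fun s => (hgd s).add ((hFd s).const_mul c)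
  have hmono : Monotone φ := by
    apply monotone_of_deriv_nonneg
    · exact fun s => ((hφd s).differentiableAt)
    · intro s
      rw [(hφd s).deriv]
      have h1 : |deriv (deriv μ) (x + s * b) * b| ≤ c * g s := by
        rw [abs_mul]
        calc |deriv (deriv μ) (x + s * b)| * |b|
            ≤ (M * deriv μ (x + s * b)) * |b| :=
              mul_le_mul_of_nonneg_right (hsc _) (abs_nonneg b)
          _ = c * g s := by rw [hc]; ring
      nlinarith [neg_abs_le (deriv (deriv μ) (x + s * b) * b)]
  have hFA : ∀ s ∈ Set.Icc (0:ℝ) 1, F s ≤ A := by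
    intro s hs
    have hAd : A = F s + ∫ r in s..1, g r := by
      rw [hF, hA]
      exact (integral_add_adjacent_intervals (hgint 0 s) (hgint s 1)).symm
    have h2 : 0 ≤ ∫ r in s..1, g r := integral_nonneg hs.2 fun r _ => hgnn r
    linarith
  have hkey : ∀ s ∈ Set.Icc (0:ℝ) 1, deriv μ x - c * A ≤ g s := by
    intro s hs
    have h1 : φ 0 ≤ φ s := hmono hs.1
    have h0 : φ 0 = deriv μ x := by
      simp [hφ, hF, hg]
    have h2 : c * F s ≤ c * A := mul_le_mul_of_nonneg_left (hFA s hs) hcnn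
    rw [h0] at h1
    simp only [hφ] at h1
    linarith
  have hmain : deriv μ x - c * A ≤ A := by
    have := integral_mono_on (μ := MeasureTheory.volume) (f := fun _ => deriv μ x - c * A)
      (g := g) (by norm_num : (0:ℝ) ≤ 1) intervalIntegrable_const (hgint 0 1) hkey
    simpa [hA] using this
  have : (1 + M * |b|) * A = A + c * A := by rw [hc]; ring
  rw [hA] at this ⊢
  linarith [hmain, this]

private lemma ftc_key (μ : ℝ → ℝ) (hdiff : Differentiable ℝ μ)
    (hdiff2 : Differentiable ℝ (deriv μ)) (x b : ℝ) :
    μ (x + b) - μ x = (∫ s in (0:ℝ)..1, deriv μ (x + s * b)) * b := by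
  have hinner : ∀ s : ℝ, HasDerivAt (fun s : ℝ => x + s * b) b s := by
    intro s
    simpa using ((hasDerivAt_id s).mul_const b).const_add x
  have hd : ∀ s ∈ Set.uIcc (0:ℝ) 1,
      HasDerivAt (fun s => μ (x + s * b)) (deriv μ (x + s * b) * b) s :=
    fun s _ => ((hdiff (x + s * b)).hasDerivAt).comp s (hinner s)
  have hint : IntervalIntegrable (fun s => deriv μ (x + s * b) * b)
      MeasureTheory.volume 0 1 :=
    ((hdiff2.continuous.comp (by continuity)).mul continuous_const).intervalIntegrable 0 1
  have h := integral_eq_sub_of_hasDerivAt hd hint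
  rw [← integral_mul_const]
  rw [h]
  norm_num

set_option maxHeartbeats 1600000 in
/-- GLM Euclidean-distance bound: with `γ = ‖f_t(θ) − f_t(θ')‖_{H(θ')⁻¹}`,
one has `‖θ − θ'‖₂ ≤ M·γ²/λ + γ/√λ`. -/
theorem euclidean_dist_le_of_grad_diff
    {d t : ℕ} (M lam : ℝ) (hM : 0 < M) (hlam : 0 < lam)
    (μ : ℝ → ℝ) (hdiff : Differentiable ℝ μ) (hdiff2 : Differentiable ℝ (deriv μ))
    (hpos : ∀ u : ℝ, 0 < deriv μ u)
    (hsc : ∀ u : ℝ, |deriv (deriv μ) u| ≤ M * deriv μ u)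
    (𝒳 : Finset (Fin d → ℝ)) (h𝒳ne : 𝒳.Nonempty)
    (h𝒳norm : ∀ X ∈ 𝒳, Real.sqrt (∑ i, X i ^ 2) ≤ 1)
    (X : Fin t → (Fin d → ℝ)) (hX : ∀ l, X l ∈ 𝒳)
    (H : (Fin d → ℝ) → Matrix (Fin d) (Fin d) ℝ)
    (hH : ∀ θ, H θ = ∑ l, deriv μ (X l ⬝ᵥ θ) • vecMulVec (X l) (X l)
        + lam • (1 : Matrix (Fin d) (Fin d) ℝ))
    (f : (Fin d → ℝ) → (Fin d → ℝ))
    (hf : ∀ θ, f θ = ∑ l, μ (X l ⬝ᵥ θ) • X l + lam • θ) :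
    ∀ θ θ' : Fin d → ℝ,
      ∀ γ : ℝ, γ = Real.sqrt ((f θ - f θ') ⬝ᵥ (H θ')⁻¹.mulVec (f θ - f θ')) →
        Real.sqrt (∑ i, (θ i - θ' i) ^ 2) ≤ M * γ ^ 2 / lam + γ / Real.sqrt lam := by
  intro θ θ' γ hγ
  have hγnn : 0 ≤ γ := by rw [hγ]; exact Real.sqrt_nonneg _
  set u : ℝ := Real.sqrt (∑ i, (θ i - θ' i) ^ 2) with hu
  have hunn : 0 ≤ u := Real.sqrt_nonneg _
  -- trivial case u = 0
  rcases eq_or_lt_of_le hunn with h0 | hupos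
  · rw [← h0]
    have h1 : 0 ≤ M * γ ^ 2 / lam := by positivity
    have h2 : 0 ≤ γ / Real.sqrt lam := by positivity
    linarith
  -- notation
  set Δ : Fin d → ℝ := θ - θ' with hΔ
  have hΔa : ∀ i, Δ i = θ i - θ' i := fun i => rfl
  have husq : ∑ i, (θ i - θ' i) ^ 2 = u ^ 2 := by
    rw [hu, Real.sq_sqrt (Finset.sum_nonneg fun i _ => sq_nonneg _)]
  have hu2 : Δ ⬝ᵥ Δ = u ^ 2 := by
    rw [← husq]
    exact Finset.sum_congr rfl fun i _ => by rw [hΔa]; ring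
  set b : Fin t → ℝ := fun l => X l ⬝ᵥ Δ with hb
  set xx : Fin t → ℝ := fun l => X l ⬝ᵥ θ' with hxx
  -- |b l| ≤ u
  have hbu : ∀ l, |b l| ≤ u := by
    intro l
    have hX1 : ∑ i, X l i ^ 2 ≤ 1 := by
      have h := h𝒳norm (X l) (hX l)
      have hnn : 0 ≤ ∑ i, X l i ^ 2 := Finset.sum_nonneg fun i _ => sq_nonneg _
      nlinarith [Real.sq_sqrt hnn, Real.sqrt_nonneg (∑ i, X l i ^ 2)]
    have hcs : (b l) ^ 2 ≤ (∑ i, X l i ^ 2) * ∑ i, Δ i ^ 2 :=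
      Finset.sum_mul_sq_le_sq_mul_sq _ _ _
    have hΔ2 : ∑ i, Δ i ^ 2 = u ^ 2 := by
      rw [← husq]; exact Finset.sum_congr rfl fun i _ => by rw [hΔa]
    have : (b l) ^ 2 ≤ u ^ 2 := by
      rw [hΔ2] at hcs; nlinarith [sq_nonneg u]
    calc |b l| = Real.sqrt ((b l) ^ 2) := (Real.sqrt_sq_eq_abs _).symm
      _ ≤ Real.sqrt (u ^ 2) := Real.sqrt_le_sqrt this
      _ = u := Real.sqrt_sq hunn
  set α : Fin t → ℝ := fun l => ∫ s in (0:ℝ)..1, deriv μ (xx l + s * b l) with hα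
  have hαnn : ∀ l, 0 ≤ α l :=
    fun l => intervalIntegral.integral_nonneg (by norm_num) fun s _ => (hpos _).le
  have hsc' : ∀ l, deriv μ (xx l) ≤ (1 + M * u) * α l := by
    intro l
    calc deriv μ (xx l) ≤ (1 + M * |b l|) * α l :=
          sc_key M hM μ hdiff2 hpos hsc (xx l) (b l)
      _ ≤ (1 + M * u) * α l := by
          refine mul_le_mul_of_nonneg_right ?_ (hαnn l)
          have := hbu l
          nlinarith
  -- gradient difference
  set v : Fin d → ℝ := f θ - f θ' with hv
  have hμdiff : ∀ l, μ (X l ⬝ᵥ θ) - μ (xx l) = α l * b l := by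
    intro l
    have hxb : X l ⬝ᵥ θ = xx l + b l := by
      rw [hxx, hb, hΔ]
      simp [dotProduct, Finset.mul_sum, Finset.sum_sub_distrib, mul_sub]
    rw [hxb]
    rw [ftc_key μ hdiff hdiff2 (xx l) (b l)]
  have hvl : v = (∑ l, (α l * b l) • X l) + lam • Δ := by
    rw [hv, hf θ, hf θ']
    ext i
    simp only [Pi.sub_apply, Pi.add_apply, Finset.sum_apply, Pi.smul_apply, smul_eq_mul,
      hΔa]
    have hsum : ∑ l, μ (X l ⬝ᵥ θ) * X l i - ∑ l, μ (xx l) * X l i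
        = ∑ l, (α l * b l) * X l i := by
      rw [← Finset.sum_sub_distrib]
      exact Finset.sum_congr rfl fun l _ => by rw [← sub_mul, hμdiff l]
    have hxxθ' : ∀ l, X l ⬝ᵥ θ' = xx l := fun l => rfl
    simp only [hxxθ']
    linarith [hsum]
  -- quadratic form of H θ'
  have hQ : ∀ z w : Fin d → ℝ, z ⬝ᵥ (H θ' *ᵥ w)
      = ∑ l, deriv μ (xx l) * ((X l ⬝ᵥ z) * (X l ⬝ᵥ w)) + lam * (z ⬝ᵥ w) := by
    intro z w
    rw [hH θ']
    exact qf_expand _ lam X z w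
  -- positive definiteness
  have hdotself : ∀ z : Fin d → ℝ, 0 ≤ z ⬝ᵥ z :=
    fun z => Finset.sum_nonneg fun i _ => mul_self_nonneg _
  have hQnn : ∀ z : Fin d → ℝ, lam * (z ⬝ᵥ z) ≤ z ⬝ᵥ (H θ' *ᵥ z) := by
    intro z
    rw [hQ]
    have : 0 ≤ ∑ l, deriv μ (xx l) * ((X l ⬝ᵥ z) * (X l ⬝ᵥ z)) :=
      Finset.sum_nonneg fun l _ => mul_nonneg (hpos _).le (mul_self_nonneg _)
    linarith
  have hPD : (H θ').PosDef := by
    refine Matrix.PosDef.of_dotProduct_mulVec_pos ?_ ?_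
    · rw [hH θ']; exact herm_expand _ lam X
    · intro z hz
      have hz2 : 0 < z ⬝ᵥ z := by
        obtain ⟨i, hi⟩ := Function.ne_iff.mp hz
        exact Finset.sum_pos' (fun j _ => mul_self_nonneg _)
          ⟨i, Finset.mem_univ i, mul_self_pos.mpr hi⟩
      have := hQnn z
      have hlz : 0 < lam * (z ⬝ᵥ z) := mul_pos hlam hz2
      simpa [star_trivial] using lt_of_lt_of_le hlz this
  have hdet : IsUnit (H θ').det := (Matrix.isUnit_iff_isUnit_det _).1 hPD.isUnit
  set w : Fin d → ℝ := (H θ')⁻¹ *ᵥ v with hw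
  have hHw : H θ' *ᵥ w = v := by
    rw [hw, Matrix.mulVec_mulVec, Matrix.mul_nonsing_inv _ hdet, Matrix.one_mulVec]
  have hγ2 : γ ^ 2 = v ⬝ᵥ w := by
    rw [hγ, Real.sq_sqrt]
    have := hPD.inv.posSemidef.dotProduct_mulVec_nonneg v
    simpa [star_trivial] using this
  -- scalar quantities
  set S1 : ℝ := Δ ⬝ᵥ v with hS1
  set S2 : ℝ := Δ ⬝ᵥ (H θ' *ᵥ Δ) with hS2
  have hS1e : S1 = ∑ l, α l * b l * b l + lam * u ^ 2 := by
    rw [hS1, hvl, dotProduct_add, dot_sum_smul, dotProduct_smul, smul_eq_mul, hu2]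
  have hS2e : S2 = ∑ l, deriv μ (xx l) * (b l * b l) + lam * u ^ 2 := by
    rw [hS2, hQ, hu2]
  have hS1lb : lam * u ^ 2 ≤ S1 := by
    rw [hS1e]
    have : 0 ≤ ∑ l, α l * b l * b l :=
      Finset.sum_nonneg fun l _ => by nlinarith [hαnn l, mul_self_nonneg (b l)]
    linarith
  have hS2lb : lam * u ^ 2 ≤ S2 := by
    rw [hS2e]
    have : 0 ≤ ∑ l, deriv μ (xx l) * (b l * b l) :=
      Finset.sum_nonneg fun l _ => mul_nonneg (hpos _).le (mul_self_nonneg _)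
    linarith
  have hS1pos : 0 < S1 := lt_of_lt_of_le (by positivity) hS1lb
  have hS2pos : 0 < S2 := lt_of_lt_of_le (by positivity) hS2lb
  -- comparison S2 ≤ (1+Mu) S1
  have hcmp : S2 ≤ (1 + M * u) * S1 := by
    rw [hS1e, hS2e, mul_add, Finset.mul_sum]
    have hterm : ∀ l ∈ Finset.univ, deriv μ (xx l) * (b l * b l)
        ≤ (1 + M * u) * (α l * b l * b l) := by
      intro l _
      have h1 := hsc' l
      have h2 : 0 ≤ b l * b l := mul_self_nonneg _
      nlinarith
    have hsum := Finset.sum_le_sum hterm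
    have hMu : 0 ≤ M * u := mul_nonneg hM.le hunn
    nlinarith [mul_nonneg (mul_nonneg hMu hlam.le) (sq_nonneg u)]
  -- Cauchy-Schwarz : S1^2 ≤ S2 * γ^2
  have hsymm : w ⬝ᵥ (H θ' *ᵥ Δ) = S1 := by
    rw [hQ, hS1]
    have : Δ ⬝ᵥ v = Δ ⬝ᵥ (H θ' *ᵥ w) := by rw [hHw]
    rw [this, hQ]
    rw [dotProduct_comm w Δ]
    congr 1
    exact Finset.sum_congr rfl fun l _ => by ring
  have hCS : S1 ^ 2 ≤ S2 * γ ^ 2 := by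
    have hE := hPD.posSemidef.dotProduct_mulVec_nonneg (S2 • w - S1 • Δ)
    rw [star_trivial] at hE
    have hexp : (S2 • w - S1 • Δ) ⬝ᵥ (H θ' *ᵥ (S2 • w - S1 • Δ))
        = S2 * S2 * (γ ^ 2) - S2 * S1 * S1 - S1 * S2 * S1 + S1 * S1 * S2 := by
      rw [Matrix.mulVec_sub, Matrix.mulVec_smul, Matrix.mulVec_smul]
      rw [sub_dotProduct, smul_dotProduct, smul_dotProduct]
      rw [dotProduct_sub, dotProduct_sub, dotProduct_smul, dotProduct_smul,
        dotProduct_smul, dotProduct_smul]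
      rw [hHw]
      have e1 : w ⬝ᵥ v = γ ^ 2 := by rw [hγ2, dotProduct_comm]
      have e2 : Δ ⬝ᵥ v = S1 := rfl
      have e3 : w ⬝ᵥ (H θ' *ᵥ Δ) = S1 := hsymm
      have e4 : Δ ⬝ᵥ (H θ' *ᵥ Δ) = S2 := rfl
      rw [e1, e2, e3, e4]
      simp only [smul_eq_mul]
      ring
    have hE' : (0:ℝ) ≤ S2 * S2 * (γ ^ 2) - S2 * S1 * S1 - S1 * S2 * S1 + S1 * S1 * S2 :=
      hE.trans_eq hexp
    nlinarith [hE', hS2pos, sq_nonneg γ]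
  -- conclude
  have hkey : lam * u ^ 2 ≤ (1 + M * u) * γ ^ 2 := by
    have h1 : S1 * S1 ≤ ((1 + M * u) * γ ^ 2) * S1 := by nlinarith [sq_nonneg γ]
    have h2 : S1 ≤ (1 + M * u) * γ ^ 2 := le_of_mul_le_mul_right h1 hS1pos
    linarith
  -- final algebra
  set r : ℝ := Real.sqrt lam with hr
  have hrpos : 0 < r := Real.sqrt_pos.mpr hlam
  have hr2 : r ^ 2 = lam := Real.sq_sqrt hlam.le
  set a : ℝ := γ / r with ha
  have hann : 0 ≤ a := div_nonneg hγnn hrpos.le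
  have hγa : γ ^ 2 = a ^ 2 * lam := by
    rw [ha, div_pow, hr2]
    field_simp
  have hMγ : M * γ ^ 2 / lam = M * a ^ 2 := by
    rw [hγa]; field_simp
  rw [hMγ]
  have hu2a : u ^ 2 ≤ a ^ 2 * (1 + M * u) := by
    rw [hγa] at hkey
    nlinarith
  by_contra hcon
  push_neg at hcon
  have p1 : (M * a ^ 2 + a) * u < u * u := mul_lt_mul_of_pos_right hcon hupos
  have p2 : a * (M * a ^ 2 + a) ≤ a * u := mul_le_mul_of_nonneg_left hcon.le hann
  nlinarith [mul_nonneg (mul_nonneg hM.le (mul_nonneg hann hann)) hann]
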